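/- For the two-resonator generalized eigenvalue problem L^{-1/2} C^α L^{-1/2} b = λ b with L = diag(ℓ1, ℓ2), the matrix admits a double eigenvalue for some α ∈ (-π/L, π/L] if and only if ℓ1 = ℓ2, s1 = s2, and α = ±π/L. -/
import Mathlib


open Matrix

/-- the symmetrised two-resonator capacitance matrix `L^{-1/2} C^α L^{-1/2}`
admits a double eigenvalue (repeated root of the characteristic polynomial, i.e.
`trace² = 4·det`) for `α ∈ (-π/L, π/L]` if and only if `ℓ1 = ℓ2`, `s1 = s2` and
`α = ±π/L`. -/
theorem stmt2 (ℓ1 ℓ2 s1 s2 L : ℝ) (h1 : 0 < ℓ1) (h2 : 0 < ℓ2) (hs1 : 0 < s1)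
    (hs2 : 0 < s2) (hL : 0 < L) (α : ℝ) (hα : α ∈ Set.Ioc (-(Real.pi/L)) (Real.pi/L)) :
    let M : Matrix (Fin 2) (Fin 2) ℂ :=
      !![(((1/s1 + 1/s2)/ℓ1 : ℝ) : ℂ),
         (-1/(s1:ℂ) - Complex.exp (Complex.I*α*L)/(s2:ℂ)) / ((Real.sqrt ℓ1 * Real.sqrt ℓ2 : ℝ) : ℂ);
         (-1/(s1:ℂ) - Complex.exp (-(Complex.I*α*L))/(s2:ℂ)) / ((Real.sqrt ℓ1 * Real.sqrt ℓ2 : ℝ) : ℂ),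
         (((1/s1 + 1/s2)/ℓ2 : ℝ) : ℂ)]
    (M.trace ^ 2 = 4 * M.det) ↔ (ℓ1 = ℓ2 ∧ s1 = s2 ∧ (α = Real.pi/L ∨ α = -(Real.pi/L))) := by
  intro M
  obtain ⟨c, hc⟩ : ∃ c, Real.cos (α*L) = c := ⟨_, rfl⟩
  obtain ⟨s, hs⟩ : ∃ s, Real.sin (α*L) = s := ⟨_, rfl⟩
  have hone' : c^2 + s^2 = 1 := by
    rw [← hc, ← hs]; have := Real.sin_sq_add_cos_sq (α*L); linarith
  have hexp1 : Complex.exp (Complex.I*α*L) = (c : ℂ) + (s : ℂ) * Complex.I := by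
    rw [show Complex.I*(α:ℂ)*(L:ℂ) = (((α*L:ℝ)):ℂ)*Complex.I by rw [Complex.ofReal_mul]; ring,
      Complex.exp_mul_I, ← Complex.ofReal_cos, ← Complex.ofReal_sin, hc, hs]
  have hexp2 : Complex.exp (-(Complex.I*α*L)) = (c : ℂ) - (s : ℂ) * Complex.I := by
    rw [show -(Complex.I*(α:ℂ)*(L:ℂ)) = (((-(α*L):ℝ)):ℂ)*Complex.I by rw [Complex.ofReal_neg, Complex.ofReal_mul]; ring,
      Complex.exp_mul_I, Complex.ofReal_neg, Complex.cos_neg, Complex.sin_neg,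
      ← Complex.ofReal_cos, ← Complex.ofReal_sin, hc, hs]
    ring
  set E : ℝ := (1/s1 + 1/s2)^2 * (1/ℓ1 - 1/ℓ2)^2
      + 4 * ((1/s1 - 1/s2)^2 + 2*(1 + c)/(s1*s2)) / ((Real.sqrt ℓ1)^2 * (Real.sqrt ℓ2)^2) with hEdef
  have hdiff : M.trace ^ 2 - 4 * M.det = ((E : ℝ) : ℂ) := by
    simp [M, Matrix.trace_fin_two, Matrix.det_fin_two, hexp1, hexp2, hEdef]
    have hone : (c : ℂ)^2 - (s : ℂ)^2 * Complex.I^2 = 1 := by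
      rw [Complex.I_sq]
      calc (c : ℂ)^2 - (s : ℂ)^2 * (-1) = ((c^2 + s^2 : ℝ) : ℂ) := by push_cast; ring
        _ = 1 := by rw [hone']; norm_num
    linear_combination (4/((s2:ℂ)^2*((Real.sqrt ℓ1:ℂ)^2*(Real.sqrt ℓ2:ℂ)^2))) * hone
  have hEsimp : E = (1/s1 + 1/s2)^2 * (1/ℓ1 - 1/ℓ2)^2
      + 4 * ((1/s1 - 1/s2)^2 + 2*(1 + c)/(s1*s2)) / (ℓ1*ℓ2) := by
    rw [hEdef, Real.sq_sqrt h1.le, Real.sq_sqrt h2.le]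
  have key : (M.trace ^ 2 = 4 * M.det) ↔ E = 0 := by
    constructor
    · intro h
      have : ((E:ℝ):ℂ) = 0 := by rw [← hdiff, h]; ring
      exact_mod_cast this
    · intro h
      have h0 : M.trace ^ 2 - 4 * M.det = 0 := by rw [hdiff, h]; norm_num
      linear_combination h0
  rw [key, hEsimp]
  clear_value M
  clear key hdiff hexp1 hexp2 M hEsimp hEdef E
  have hLne : L ≠ 0 := ne_of_gt hL
  have hcge : -1 ≤ c := by rw [← hc]; exact Real.neg_one_le_cos (α*L)
  have hθ1 : -Real.pi < α*L := by
    have := mul_lt_mul_of_pos_right hα.1 hL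
    rwa [neg_mul, div_mul_cancel₀ _ hLne] at this
  have hθ2 : α*L ≤ Real.pi := by
    have := mul_le_mul_of_nonneg_right hα.2 hL.le
    rwa [div_mul_cancel₀ _ hLne] at this
  constructor
  · intro hE0
    have t1 : 0 ≤ (1/s1 + 1/s2)^2 * (1/ℓ1 - 1/ℓ2)^2 := by positivity
    have t2 : 0 ≤ (1/s1 - 1/s2)^2 := by positivity
    have t3 : 0 ≤ 2*(1 + c)/(s1*s2) := by
      apply div_nonneg _ (by positivity); linarith
    have hd : 0 < ℓ1 * ℓ2 := by positivity
    have hu : 0 ≤ 4 * ((1/s1 - 1/s2)^2 + 2*(1 + c)/(s1*s2)) / (ℓ1*ℓ2) :=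
      div_nonneg (by linarith) hd.le
    have e1 : (1/s1 + 1/s2)^2 * (1/ℓ1 - 1/ℓ2)^2 = 0 := by linarith
    have eu : 4 * ((1/s1 - 1/s2)^2 + 2*(1 + c)/(s1*s2)) / (ℓ1*ℓ2) = 0 := by linarith
    have eX : (1/s1 - 1/s2)^2 + 2*(1 + c)/(s1*s2) = 0 := by
      rcases div_eq_zero_iff.1 eu with h | h
      · linarith
      · exact absurd h hd.ne'
    have e2 : (1/s1 - 1/s2)^2 = 0 := by linarith
    have e3 : 2*(1 + c)/(s1*s2) = 0 := by linarith
    have hll : ℓ1 = ℓ2 := by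
      have hA : 0 < 1/s1 + 1/s2 := by positivity
      have hsq : (1/ℓ1 - 1/ℓ2)^2 = 0 := by
        rcases mul_eq_zero.1 e1 with h | h
        · exact absurd h (by positivity)
        · exact h
      have hz := pow_eq_zero_iff (n := 2) (by norm_num) |>.1 hsq
      have hinv : 1/ℓ1 = 1/ℓ2 := by linarith
      rw [div_eq_div_iff (ne_of_gt h1) (ne_of_gt h2)] at hinv
      linarith
    have hss : s1 = s2 := by
      have hz := pow_eq_zero_iff (n := 2) (by norm_num) |>.1 e2
      have hinv : 1/s1 = 1/s2 := by linarith
      rw [div_eq_div_iff (ne_of_gt hs1) (ne_of_gt hs2)] at hinv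
      linarith
    refine ⟨hll, hss, Or.inl ?_⟩
    have hc1 : c = -1 := by
      rcases div_eq_zero_iff.1 e3 with h | h
      · linarith
      · exact absurd h (by positivity)
    have hcos : Real.cos (α*L) = -1 := by rw [hc, hc1]
    have habs : |α*L| ∈ Set.Icc 0 Real.pi := ⟨abs_nonneg _, abs_le.2 ⟨hθ1.le, hθ2⟩⟩
    have := Real.injOn_cos habs ⟨Real.pi_pos.le, le_refl _⟩
      (by rw [Real.cos_abs, hcos, Real.cos_pi])
    rcases (abs_eq Real.pi_pos.le).1 this with h' | h'
    · rw [eq_div_iff hLne]; exact h'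
    · exfalso; nlinarith [hθ1]
  · rintro ⟨hll, hss, hαv | hαv⟩
    · have hcv : c = -1 := by
        rw [← hc, hαv, div_mul_cancel₀ _ hLne, Real.cos_pi]
      rw [hll, hss, hcv]
      norm_num
    · exfalso
      have := hα.1
      rw [hαv] at this
      exact lt_irrefl _ this
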